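/- Let K be any field, b ∈ K^×, and let σ be the K-automorphism of K(x,y) of order 3 defined by σ(x) = y, σ(y) = b/(xy). Then the fixed field K(x,y)^⟨σ⟩ equals K(ũ, ṽ), where ũ = y(y³x³ + bx³ − 3byx² + b²)/(y²x⁴ − y³x³ + y⁴x² − byx² − by²x + b²) and ṽ = x(x³y³ + by³ − 3bxy² + b²)/(y²x⁴ − y³x³ + y⁴x² − byx² − by²x + b²). -/

import Mathlib

set_option maxHeartbeats 2000000
set_option synthInstance.maxHeartbeats 1000000

open MvPolynomial IntermediateField

theorem fixed_field_twisted_C3 (K F : Type*) [Field K] [Field F]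
    [Algebra K F] [Algebra (MvPolynomial (Fin 2) K) F]
    [IsScalarTower K (MvPolynomial (Fin 2) K) F]
    [IsFractionRing (MvPolynomial (Fin 2) K) F]
    (b : K) (hb : b ≠ 0)
    (x y : F)
    (hx : x = algebraMap (MvPolynomial (Fin 2) K) F (X 0))
    (hy : y = algebraMap (MvPolynomial (Fin 2) K) F (X 1))
    (σ : F ≃ₐ[K] F)
    (hσx : σ x = y) (hσy : σ y = algebraMap K F b / (x * y)) :
    fixedField (Subgroup.zpowers σ) =
      adjoin K
        {y * (y ^ 3 * x ^ 3 + algebraMap K F b * x ^ 3 - 3 * (algebraMap K F b * y * x ^ 2)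
              + algebraMap K F b ^ 2) /
           (y ^ 2 * x ^ 4 - y ^ 3 * x ^ 3 + y ^ 4 * x ^ 2 - algebraMap K F b * y * x ^ 2
              - algebraMap K F b * y ^ 2 * x + algebraMap K F b ^ 2),
         x * (x ^ 3 * y ^ 3 + algebraMap K F b * y ^ 3 - 3 * (algebraMap K F b * x * y ^ 2)
              + algebraMap K F b ^ 2) /
           (y ^ 2 * x ^ 4 - y ^ 3 * x ^ 3 + y ^ 4 * x ^ 2 - algebraMap K F b * y * x ^ 2
              - algebraMap K F b * y ^ 2 * x + algebraMap K F b ^ 2)} := by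
  set A := algebraMap (MvPolynomial (Fin 2) K) F with hAdef
  have hAinj : Function.Injective A := IsFractionRing.injective _ _
  have hAC : ∀ c : K, A (C c) = algebraMap K F c := by
    intro c
    rw [IsScalarTower.algebraMap_apply K (MvPolynomial (Fin 2) K) F, MvPolynomial.algebraMap_eq]
  have key_ne : ∀ (q : MvPolynomial (Fin 2) K) (f : Fin 2 → K), eval f q ≠ 0 → A q ≠ 0 := by
    intro q f hev h0
    have hq : q = 0 := hAinj (by rw [h0, map_zero])
    rw [hq] at hev; simp at hev
  have hx0 : x ≠ 0 := by rw [hx]; exact key_ne _ ![1, 0] (by simp)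
  have hy0 : y ≠ 0 := by rw [hy]; exact key_ne _ ![0, 1] (by simp)
  have hbF : algebraMap K F b ≠ 0 :=
    fun h => hb ((algebraMap K F).injective (by rw [h, map_zero]))
  -- abbreviations
  set Dd := y ^ 2 * x ^ 4 - y ^ 3 * x ^ 3 + y ^ 4 * x ^ 2 - algebraMap K F b * y * x ^ 2 - algebraMap K F b * y ^ 2 * x + algebraMap K F b ^ 2 with hDd
  set Nu := y * (y ^ 3 * x ^ 3 + algebraMap K F b * x ^ 3 - 3 * (algebraMap K F b * y * x ^ 2) + algebraMap K F b ^ 2) with hNu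
  set Nv := x * (x ^ 3 * y ^ 3 + algebraMap K F b * y ^ 3 - 3 * (algebraMap K F b * x * y ^ 2) + algebraMap K F b ^ 2) with hNv
  set u := Nu / Dd with hu
  set v := Nv / Dd with hv
  set z := algebraMap K F b / (x * y) with hz
  -- nonvanishing
  have hDdR : (y ^ 2 * x ^ 4 - y ^ 3 * x ^ 3 + y ^ 4 * x ^ 2 - algebraMap K F b * y * x ^ 2 - algebraMap K F b * y ^ 2 * x + algebraMap K F b ^ 2) ≠ 0 := by
    have hfold : (y ^ 2 * x ^ 4 - y ^ 3 * x ^ 3 + y ^ 4 * x ^ 2 - algebraMap K F b * y * x ^ 2 - algebraMap K F b * y ^ 2 * x + algebraMap K F b ^ 2) = A ((X 1 : MvPolynomial (Fin 2) K) ^ 2 * (X 0) ^ 4 - (X 1) ^ 3 * (X 0) ^ 3 + (X 1) ^ 4 * (X 0) ^ 2 - C b * (X 1) * (X 0) ^ 2 - C b * (X 1) ^ 2 * (X 0) + (C b) ^ 2) := by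
      rw [hx, hy, ← hAC b]
      simp only [map_add, map_sub, map_mul, map_pow]
    rw [hfold]
    refine key_ne _ ![0, 0] ?_
    simpa using pow_ne_zero 2 hb
  have hNuR : (y * (y ^ 3 * x ^ 3 + algebraMap K F b * x ^ 3 - 3 * (algebraMap K F b * y * x ^ 2) + algebraMap K F b ^ 2)) ≠ 0 := by
    have hfold : (y * (y ^ 3 * x ^ 3 + algebraMap K F b * x ^ 3 - 3 * (algebraMap K F b * y * x ^ 2) + algebraMap K F b ^ 2)) = A ((X 1 : MvPolynomial (Fin 2) K) * ((X 1) ^ 3 * (X 0) ^ 3 + C b * (X 0) ^ 3 - 3 * (C b * (X 1) * (X 0) ^ 2) + (C b) ^ 2)) := by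
      rw [hx, hy, ← hAC b]
      simp only [map_add, map_sub, map_mul, map_pow, map_ofNat]
    rw [hfold]
    refine key_ne _ ![0, 1] ?_
    simpa using pow_ne_zero 2 hb
  have hNvR : (x * (x ^ 3 * y ^ 3 + algebraMap K F b * y ^ 3 - 3 * (algebraMap K F b * x * y ^ 2) + algebraMap K F b ^ 2)) ≠ 0 := by
    have hfold : (x * (x ^ 3 * y ^ 3 + algebraMap K F b * y ^ 3 - 3 * (algebraMap K F b * x * y ^ 2) + algebraMap K F b ^ 2)) = A ((X 0 : MvPolynomial (Fin 2) K) * ((X 0) ^ 3 * (X 1) ^ 3 + C b * (X 1) ^ 3 - 3 * (C b * (X 0) * (X 1) ^ 2) + (C b) ^ 2)) := by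
      rw [hx, hy, ← hAC b]
      simp only [map_add, map_sub, map_mul, map_pow, map_ofNat]
    rw [hfold]
    refine key_ne _ ![1, 0] ?_
    simpa using pow_ne_zero 2 hb
  have hNxDR : (y * (y ^ 3 * x ^ 3 + algebraMap K F b * x ^ 3 - 3 * (algebraMap K F b * y * x ^ 2) + algebraMap K F b ^ 2)) - x * (y ^ 2 * x ^ 4 - y ^ 3 * x ^ 3 + y ^ 4 * x ^ 2 - algebraMap K F b * y * x ^ 2 - algebraMap K F b * y ^ 2 * x + algebraMap K F b ^ 2) ≠ 0 := by
    have hfold : (y * (y ^ 3 * x ^ 3 + algebraMap K F b * x ^ 3 - 3 * (algebraMap K F b * y * x ^ 2) + algebraMap K F b ^ 2)) - x * (y ^ 2 * x ^ 4 - y ^ 3 * x ^ 3 + y ^ 4 * x ^ 2 - algebraMap K F b * y * x ^ 2 - algebraMap K F b * y ^ 2 * x + algebraMap K F b ^ 2) = A (((X 1 : MvPolynomial (Fin 2) K) * ((X 1) ^ 3 * (X 0) ^ 3 + C b * (X 0) ^ 3 - 3 * (C b * (X 1) * (X 0) ^ 2) + (C b) ^ 2)) - X 0 * ((X 1 : MvPolynomial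 (Fin 2) K) ^ 2 * (X 0) ^ 4 - (X 1) ^ 3 * (X 0) ^ 3 + (X 1) ^ 4 * (X 0) ^ 2 - C b * (X 1) * (X 0) ^ 2 - C b * (X 1) ^ 2 * (X 0) + (C b) ^ 2)) := by
      rw [hx, hy, ← hAC b]
      simp only [map_add, map_sub, map_mul, map_pow, map_ofNat]
    rw [hfold]
    refine key_ne _ ![0, 1] ?_
    simpa using pow_ne_zero 2 hb
  have hDne : Dd ≠ 0 := by rw [hDd]; exact hDdR
  have hNu0 : Nu ≠ 0 := by rw [hNu]; exact hNuR
  have hNv0 : Nv ≠ 0 := by rw [hNv]; exact hNvR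
  have hu0 : u ≠ 0 := by rw [hu]; exact div_ne_zero hNu0 hDne
  have hv0 : v ≠ 0 := by rw [hv]; exact div_ne_zero hNv0 hDne
  have hxyz : x * y * z = algebraMap K F b := by
    rw [hz]; field_simp
  have hσy' : σ y = z := by rw [hσy]
  have hσz : σ z = x := by
    rw [hz, map_div₀, map_mul, AlgEquiv.commutes, hσx, hσy', hz]
    field_simp
  -- σ has order 3
  have hσ3 : σ ^ 3 = 1 := by
    have hRH : ((σ : F →+* F).comp ((σ : F →+* F).comp (σ : F →+* F))) = RingHom.id F := by
      refine IsLocalization.ringHom_ext (nonZeroDivisors (MvPolynomial (Fin 2) K)) ?_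
      refine MvPolynomial.ringHom_ext (fun c => ?_) (fun i => ?_)
      · simp only [RingHom.comp_apply, RingHom.id_apply]
        show σ (σ (σ (A (C c)))) = A (C c)
        rw [hAC]
        simp only [AlgEquiv.commutes]
      · fin_cases i
        · simp only [RingHom.comp_apply, RingHom.id_apply]
          show σ (σ (σ (A (X 0)))) = A (X 0)
          rw [← hx, hσx, hσy', hσz]
        · simp only [RingHom.comp_apply, RingHom.id_apply]
          show σ (σ (σ (A (X 1)))) = A (X 1)
          rw [← hy, hσy', hσz, hσx]
    refine AlgEquiv.ext fun a => ?_
    have h3 : σ (σ (σ a)) = a := by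
      have := DFunLike.congr_fun hRH a
      simpa using this
    show (σ ^ 3) a = a
    rw [pow_succ, pow_succ, pow_one, AlgEquiv.mul_apply, AlgEquiv.mul_apply, h3]
  have hσ1 : σ ≠ 1 := by
    intro h
    rw [h] at hσx
    simp only [AlgEquiv.one_apply] at hσx
    have hxy : x - y ≠ 0 := by
      rw [hx, hy, ← map_sub]
      exact key_ne _ ![1, 0] (by simp)
    rw [hσx] at hxy; simp at hxy
  haveI : Fact (Nat.Prime 3) := ⟨by norm_num⟩
  have hord : orderOf σ = 3 := orderOf_eq_prime hσ3 hσ1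
  have hfo : IsOfFinOrder σ := isOfFinOrder_iff_pow_eq_one.mpr ⟨3, by norm_num, hσ3⟩
  haveI : Finite ↥(Subgroup.zpowers σ) := hfo.finite_zpowers.to_subtype
  haveI : Fintype ↥(Subgroup.zpowers σ) := Fintype.ofFinite _
  haveI : FaithfulSMul ↥(Subgroup.zpowers σ) F := by
    constructor
    intro g₁ g₂ h
    ext a
    have := h a
    exact this
  have hcard : Fintype.card ↥(Subgroup.zpowers σ) = 3 := by
    rw [← Nat.card_eq_fintype_card, Nat.card_zpowers, hord]
  have hfr : Module.finrank ↥(fixedField (Subgroup.zpowers σ)) F = 3 := by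
    rw [← hcard]
    exact FixedPoints.finrank_eq_card (Subgroup.zpowers σ) F
  have hfixmem : ∀ a : F, σ a = a → a ∈ fixedField (Subgroup.zpowers σ) := by
    intro a ha
    have hinv : σ⁻¹ = σ ^ 2 := inv_eq_of_mul_eq_one_left (by rw [← pow_succ]; exact hσ3)
    have hzp : ∀ n : ℤ, (σ ^ n) a = a := by
      intro n
      induction n using Int.induction_on with
      | zero => simp
      | succ k ih => rw [zpow_add_one, AlgEquiv.mul_apply, ha, ih]
      | pred k ih =>
        rw [zpow_sub_one, AlgEquiv.mul_apply, hinv]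
        rw [show (σ ^ 2) a = a by rw [pow_succ, pow_one, AlgEquiv.mul_apply, ha, ha]] at *
        rw [ih]
    rintro ⟨g, hg⟩
    obtain ⟨n, rfl⟩ := hg
    exact hzp n
  -- σ-invariance of u and v
  have hσDd : σ Dd = z ^ 2 * y ^ 4 - z ^ 3 * y ^ 3 + z ^ 4 * y ^ 2 - algebraMap K F b * z * y ^ 2 - algebraMap K F b * z ^ 2 * y + algebraMap K F b ^ 2 := by
    rw [hDd]
    simp only [map_add, map_sub, map_mul, map_pow, AlgEquiv.commutes, hσx, hσy']
  have hσNu : σ Nu = z * (z ^ 3 * y ^ 3 + algebraMap K F b * y ^ 3 - 3 * (algebraMap K F b * z * y ^ 2) + algebraMap K F b ^ 2) := by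
    rw [hNu]
    simp only [map_add, map_sub, map_mul, map_pow, map_ofNat, AlgEquiv.commutes, hσx, hσy']
  have hσNv : σ Nv = y * (y ^ 3 * z ^ 3 + algebraMap K F b * z ^ 3 - 3 * (algebraMap K F b * y * z ^ 2) + algebraMap K F b ^ 2) := by
    rw [hNv]
    simp only [map_add, map_sub, map_mul, map_pow, map_ofNat, AlgEquiv.commutes, hσx, hσy']
  have hD2 : (z ^ 2 * y ^ 4 - z ^ 3 * y ^ 3 + z ^ 4 * y ^ 2 - algebraMap K F b * z * y ^ 2 - algebraMap K F b * z ^ 2 * y + algebraMap K F b ^ 2) ≠ 0 := by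
    rw [← hσDd]
    intro h
    exact hDne (σ.injective (by rw [h, map_zero]))
  have hσu : σ u = u := by
    rw [hu, map_div₀, hσNu, hσDd, hNu, hDd]
    rw [div_eq_div_iff hD2 hDdR]
    linear_combination (- z * (algebraMap K F b) ^ 3 + y * (algebraMap K F b) ^ 3 + (2) * y ^ 2 * z ^ 2 * (algebraMap K F b) ^ 2 + (-2) * y ^ 3 * z * (algebraMap K F b) ^ 2 - y ^ 4 * z ^ 3 * (algebraMap K F b) + y ^ 5 * z ^ 2 * (algebraMap K F b) - x * y * z ^ 2 * (algebraMap K F b) ^ 2 + (2) * x * y ^ 2 * z * (algebraMap K F b) ^ 2 + (2) * x * y ^ 3 * z ^ 3 * (algebraMap K F b) + (-5) * x * y ^ 4 * z ^ 2 * (algebraMap K F b) + x * y ^ 5 * z * (algebraMap K F b) + x * y ^ 6 * z ^ 3 + x ^ 2 * y * z * (algebraMap K F b) ^ 2 + (-3) * x ^ 2 * y ^ 2 * (algebraMap K F b) ^ 2 - x ^ 2 * y ^ 2 * z ^ 3 * (algebraMap K F b) + (2) * x ^ 2 * y ^ 3 * z ^ 2 * (algebraMap K F b) + (3) * x ^ 2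 * y ^ 4 * z * (algebraMap K F b) + (-2) * x ^ 2 * y ^ 5 * z ^ 3 + x ^ 2 * y ^ 6 * z ^ 2 - x ^ 2 * y ^ 7 * z + x ^ 3 * y * (algebraMap K F b) ^ 2 + (-3) * x ^ 3 * y ^ 3 * z * (algebraMap K F b) + x ^ 3 * y ^ 4 * (algebraMap K F b) + x ^ 3 * y ^ 4 * z ^ 3) * hxyz
  have hσv : σ v = v := by
    rw [hv, map_div₀, hσNv, hσDd, hNv, hDd]
    rw [div_eq_div_iff hD2 hDdR]
    linear_combination (- y * (algebraMap K F b) ^ 3 - y * z ^ 3 * (algebraMap K F b) ^ 2 + (3) * y ^ 2 * z ^ 2 * (algebraMap K F b) ^ 2 - y ^ 4 * z ^ 3 * (algebraMap K F b) + x * (algebraMap K F b) ^ 3 - x * y * z ^ 2 * (algebraMap K F b) ^ 2 + (-2) * x * y ^ 2 * z * (algebraMap K F b) ^ 2 + (2) * x * y ^ 3 * (algebraMap K F b) ^ 2 + (3) * x * y ^ 3 * z ^ 3 * (algebraMap K F b) + (-3) * x * y ^ 4 * z ^ 2 * (algebraMap K F b) - x * y ^ 5 * z * (algebraMap K F b)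 + x * y ^ 7 * z ^ 2 + x ^ 2 * y * z * (algebraMap K F b) ^ 2 + (-2) * x ^ 2 * y ^ 2 * (algebraMap K F b) ^ 2 + (-2) * x ^ 2 * y ^ 3 * z ^ 2 * (algebraMap K F b) + (5) * x ^ 2 * y ^ 4 * z * (algebraMap K F b) - x ^ 2 * y ^ 5 * (algebraMap K F b) - x ^ 2 * y ^ 6 * z ^ 2 + x ^ 3 * y ^ 2 * z ^ 2 * (algebraMap K F b) + (-2) * x ^ 3 * y ^ 3 * z * (algebraMap K F b) + x ^ 3 * y ^ 4 * (algebraMap K F b) - x ^ 3 * y ^ 4 * z ^ 3 + (2) * x ^ 3 * y ^ 5 * z ^ 2 - x ^ 3 * y ^ 6 * z) * hxyz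
  -- the candidate field
  set E := adjoin K {u, v} with hE
  have huE : u ∈ E := subset_adjoin K _ (Set.mem_insert u {v})
  have hvE : v ∈ E := subset_adjoin K _ (Set.mem_insert_of_mem u rfl)
  have h2E : (2 : F) ∈ E := by
    rw [show (2 : F) = algebraMap K F 2 from (map_ofNat (algebraMap K F) 2).symm]
    exact E.algebraMap_mem 2
  have h3E : (3 : F) ∈ E := by
    rw [show (3 : F) = algebraMap K F 3 from (map_ofNat (algebraMap K F) 3).symm]
    exact E.algebraMap_mem 3
  -- symmetric functions lie in E
  have he1 : x + y + z = (u ^ 3 + v ^ 3 + algebraMap K F b) / (u * v) := by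
    rw [hu, hv, hz]
    field_simp
    rw [hNu, hNv, hDd]
    ring
  have hw : u ^ 2 - u * v + v ^ 2 = y * u + x * v - x * y := by
    rw [hu, hv]
    field_simp
    rw [hNu, hNv, hDd]
    ring
  have he2 : x * y + y * z + z * x = (u ^ 4 - 2 * u ^ 3 * v + 3 * u ^ 2 * v ^ 2
      - 2 * u * v ^ 3 + v ^ 4 + algebraMap K F b * u + algebraMap K F b * v) / (u * v) := by
    have hquad : u ^ 4 - 2 * u ^ 3 * v + 3 * u ^ 2 * v ^ 2 - 2 * u * v ^ 3 + v ^ 4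
        + algebraMap K F b * u + algebraMap K F b * v
        = (y * u + x * v - x * y) ^ 2 + algebraMap K F b * (u + v) := by
      rw [← hw]; ring
    rw [hquad]
    rw [hu, hv, hz]
    field_simp
    rw [hNu, hNv, hDd]
    ring
  have he1E : x + y + z ∈ E := by
    rw [he1]
    exact div_mem (add_mem (add_mem (pow_mem huE 3) (pow_mem hvE 3)) (E.algebraMap_mem b))
      (mul_mem huE hvE)
  have he2E : x * y + y * z + z * x ∈ E := by
    rw [he2]
    refine div_mem ?_ (mul_mem huE hvE)
    refine add_mem (add_mem (add_mem (sub_mem (add_mem (sub_mem (pow_mem huE 4)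
      (mul_mem (mul_mem h2E (pow_mem huE 3)) hvE))
      (mul_mem (mul_mem h3E (pow_mem huE 2)) (pow_mem hvE 2)))
      (mul_mem (mul_mem h2E huE) (pow_mem hvE 3)))
      (pow_mem hvE 4))
      (mul_mem (E.algebraMap_mem b) huE))
      (mul_mem (E.algebraMap_mem b) hvE)
  -- y is rational in u, v, x
  have hux : u - x ≠ 0 := by
    have hux_eq : u - x = (Nu - x * Dd) / Dd := by
      rw [hu]; field_simp
    rw [hux_eq]
    refine div_ne_zero ?_ hDne
    rw [hNu, hDd]; exact hNxDR
  have hy_eq : y = (u ^ 2 - u * v + v ^ 2 - x * v) / (u - x) := by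
    rw [eq_div_iff hux]
    linear_combination (-1 : F) * hw
  -- adjoining x to E gives everything
  have hEsub : ∀ w : F, w ∈ E → w ∈ adjoin ↥E {x} := fun w hw =>
    (adjoin ↥E {x}).algebraMap_mem (⟨w, hw⟩ : ↥E)
  have hxT : x ∈ adjoin ↥E {x} := mem_adjoin_simple_self ↥E x
  have hyT : y ∈ adjoin ↥E {x} := by
    rw [hy_eq]
    exact div_mem (sub_mem (add_mem (sub_mem (pow_mem (hEsub u huE) 2)
      (mul_mem (hEsub u huE) (hEsub v hvE))) (pow_mem (hEsub v hvE) 2))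
      (mul_mem hxT (hEsub v hvE))) (sub_mem (hEsub u huE) hxT)
  have hpoly : ∀ q : MvPolynomial (Fin 2) K, A q ∈ adjoin ↥E {x} := by
    intro q
    induction q using MvPolynomial.induction_on with
    | C c => rw [hAC]; exact hEsub _ (E.algebraMap_mem c)
    | add p q hp hq => rw [map_add]; exact add_mem hp hq
    | mul_X p i hp =>
      rw [map_mul]
      refine mul_mem hp ?_
      fin_cases i
      · show A (X 0) ∈ adjoin ↥E {x}
        rw [← hx]; exact hxT
      · show A (X 1) ∈ adjoin ↥E {x}
        rw [← hy]; exact hyT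
  have htop : adjoin ↥E {x} = ⊤ := by
    rw [eq_top_iff]
    rintro f -
    obtain ⟨p, q, hq, hfeq⟩ := IsFractionRing.div_surjective (A := MvPolynomial (Fin 2) K) f
    rw [← hfeq]
    exact div_mem (hpoly p) (hpoly q)
  -- x is integral of degree ≤ 3 over E
  set P : Polynomial ↥E := Polynomial.X ^ 3 + (Polynomial.C (-(⟨x + y + z, he1E⟩ : ↥E))
    * Polynomial.X ^ 2 + Polynomial.C (⟨x * y + y * z + z * x, he2E⟩ : ↥E) * Polynomial.X
    + Polynomial.C (-(⟨algebraMap K F b, E.algebraMap_mem b⟩ : ↥E))) with hP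
  have hmon : P.Monic := by
    rw [hP]
    exact Polynomial.monic_X_pow_add
      (lt_of_le_of_lt Polynomial.degree_quadratic_le (by norm_num))
  have haev : Polynomial.aeval x P = 0 := by
    have hmap : ∀ (w : F) (hw : w ∈ E), algebraMap ↥E F ⟨w, hw⟩ = w := fun _ _ => rfl
    rw [hP]
    simp only [map_add, map_mul, map_pow, map_neg, Polynomial.aeval_X, Polynomial.aeval_C, hmap]
    linear_combination hxyz
  have hint : IsIntegral ↥E x := ⟨P, hmon, haev⟩
  have hPdeg : P.natDegree = 3 := by
    have hd : P.degree = 3 := by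
      rw [hP, Polynomial.degree_add_eq_left_of_degree_lt (by
        rw [Polynomial.degree_X_pow]
        exact lt_of_le_of_lt Polynomial.degree_quadratic_le (by norm_num)),
        Polynomial.degree_X_pow]
      norm_cast
    exact Polynomial.natDegree_eq_of_degree_eq_some hd
  have hFD : FiniteDimensional ↥E F := by
    have h1 := adjoin.finiteDimensional hint
    rw [htop] at h1
    exact topEquiv.toLinearEquiv.finiteDimensional
  have hfr2 : Module.finrank ↥E F ≤ 3 := by
    have heq : Module.finrank ↥E F = (minpoly ↥E x).natDegree := by
      rw [← adjoin.finrank hint, htop, finrank_top']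
    rw [heq]
    calc (minpoly ↥E x).natDegree ≤ P.natDegree :=
          Polynomial.natDegree_le_of_dvd (minpoly.dvd ↥E x haev) hmon.ne_zero
      _ = 3 := hPdeg
  have hEle : E ≤ fixedField (Subgroup.zpowers σ) := by
    rw [hE]
    refine adjoin_le_iff.mpr ?_
    intro w hw
    simp only [Set.mem_insert_iff, Set.mem_singleton_iff] at hw
    rcases hw with rfl | rfl
    · exact hfixmem u hσu
    · exact hfixmem v hσv
  exact (IntermediateField.eq_of_le_of_finrank_le' hEle (by rw [hfr]; exact hfr2)).symm
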